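/- Let M and K be symmetric positive semidefinite n×n real matrices, let C be a symmetric n×n real matrix with C ≼ K + M, and let 0 < h ≤ 1. Then h⁻²·(M⊗M) + C⊗M + M⊗C ≼ 2·h⁻²·(M⊗M) + K⊗M + M⊗K + M⊗M. -/

import Mathlib

open Matrix Kronecker

lemma psd_kron {n : ℕ} {A B : Matrix (Fin n) (Fin n) ℝ}
    (hA : A.PosSemidef) (hB : B.PosSemidef) : (A ⊗ₖ B).PosSemidef := by
  exact hA.kronecker hB

lemma psd_smul {m : Type*} [Fintype m] {A : Matrix m m ℝ} (hA : A.PosSemidef)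
    {c : ℝ} (hc : 0 ≤ c) : (c • A).PosSemidef := by
  refine ⟨?_, fun x => ?_⟩
  · simp [Matrix.IsHermitian, Matrix.conjTranspose_smul, hA.1.eq]
    rw [show Aᵀ = A from hA.1.eq]
  · exact (hA.smul hc).2 x

/-- key step of the approximation property of the two-dimensional
smoother. If `C ≼ K + M` and `0 < h ≤ 1`, then
`h⁻² (M⊗M) + C⊗M + M⊗C ≼ 2h⁻² (M⊗M) + K⊗M + M⊗K + M⊗M`. -/
theorem stmt16 {n : ℕ} (M K C : Matrix (Fin n) (Fin n) ℝ)
    (hM : M.PosSemidef) (hK : K.PosSemidef) (hCsymm : C.IsSymm)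
    (hC : (K + M - C).PosSemidef)
    (h : ℝ) (hh0 : 0 < h) (hh1 : h ≤ 1) :
    (((2 * (h ^ 2)⁻¹) • (M ⊗ₖ M) + (K ⊗ₖ M + M ⊗ₖ K + M ⊗ₖ M))
      - ((h ^ 2)⁻¹ • (M ⊗ₖ M) + C ⊗ₖ M + M ⊗ₖ C)).PosSemidef := by
  have key : (((2 * (h ^ 2)⁻¹) • (M ⊗ₖ M) + (K ⊗ₖ M + M ⊗ₖ K + M ⊗ₖ M))
      - ((h ^ 2)⁻¹ • (M ⊗ₖ M) + C ⊗ₖ M + M ⊗ₖ C))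
      = ((h ^ 2)⁻¹ - 1) • (M ⊗ₖ M) + ((K + M - C) ⊗ₖ M + M ⊗ₖ (K + M - C)) := by
    ext i j
    simp only [Matrix.kroneckerMap_apply, Matrix.add_apply, Matrix.sub_apply,
      Matrix.smul_apply, smul_eq_mul]
    ring
  rw [key]
  have hsmul : (((h ^ 2)⁻¹ - 1) • (M ⊗ₖ M)).PosSemidef := by
    have h1 : h ^ 2 ≤ 1 := by nlinarith
    have h2 : 1 ≤ (h ^ 2)⁻¹ := by
      rw [le_inv_comm₀ one_pos (by positivity)]; simpa using h1
    exact psd_smul (psd_kron hM hM) (by linarith)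
  exact hsmul.add ((psd_kron hC hM).add (psd_kron hM hC))
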